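/- Assume φ̄ ∈ C²([0,1];𝓗) solves the MEP problem and assumption (A) is satisfied. Then there exist constants 0 < c ≤ C, depending only on E and φ̄, such that c ≤ |λ̄(α) / (α(α−s̄)(α−1))| ≤ C for all α ∈ (0,s̄) ∪ (s̄,1). -/

import Mathlib

noncomputable section

open Set
open scoped RealInnerProductSpace Topology

variable {H : Type*} [NormedAddCommGroup H] [InnerProductSpace ℝ H] [CompleteSpace H]

/-- Orthogonal projection of `y` onto the span of `v` (`P_v y`). -/
def Pproj (v y : H) : H := ⟪y, ‖v‖⁻¹ • v⟫ • (‖v‖⁻¹ • v)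

/-- Projection of `y` onto the orthogonal complement of `v` (`P_v^⊥ y`). -/
def Pperp (v y : H) : H := y - Pproj v y

/-- `f` is `C¹` on `[a,b]` with derivative `f'`. -/
def C1On {F : Type*} [NormedAddCommGroup F] [NormedSpace ℝ F] (a b : ℝ) (f f' : ℝ → F) : Prop :=
  (∀ α ∈ Icc a b, HasDerivWithinAt f (f' α) (Icc a b) α) ∧ ContinuousOn f' (Icc a b)

/-- `f` is `C²` on `[a,b]`. -/
def C2On {F : Type*} [NormedAddCommGroup F] [NormedSpace ℝ F] (a b : ℝ) (f f' f'' : ℝ → F) : Prop :=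
  C1On a b f f' ∧ C1On a b f' f''

/-- The length `L(φ)` of a curve with derivative `φ'`. -/
def len {F : Type*} [NormedAddCommGroup F] (φ' : ℝ → F) : ℝ := ∫ s in (0:ℝ)..1, ‖φ' s‖

/-- `Γ(φ)(α) = ∫₀^α |φ'| − α L(φ)`. -/
def Gam {F : Type*} [NormedAddCommGroup F] (φ' : ℝ → F) (α : ℝ) : ℝ :=
  (∫ s in (0:ℝ)..α, ‖φ' s‖) - α * len φ'

/-- The admissible class `U` of regular curves joining `yA` to `yB`. -/
def InU (yA yB : H) (φ φ' : ℝ → H) : Prop :=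
  C1On 0 1 φ φ' ∧ φ 0 = yA ∧ φ 1 = yB ∧ ∀ α ∈ Icc (0:ℝ) 1, φ' α ≠ 0

/-- The MEP equations. -/
def SolvesMEP (E : H → ℝ) (φ φ' : ℝ → H) : Prop :=
  (∀ α ∈ Icc (0:ℝ) 1, Pperp (φ' α) (gradient E (φ α)) = 0) ∧
  (∀ α ∈ Icc (0:ℝ) 1, Gam φ' α = 0)

/-- Strong local minimizer. -/
def IsStrongMin (E : H → ℝ) (hess : H → H →L[ℝ] H) (y : H) : Prop :=
  gradient E y = 0 ∧ ∃ c > 0, ∀ u : H, c * ‖u‖ ^ 2 ≤ ⟪hess y u, u⟫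

/-- Index-1 saddle point. -/
def IsIndex1Saddle (E : H → ℝ) (hess : H → H →L[ℝ] H) (y : H) : Prop :=
  gradient E y = 0 ∧
    ∃ v₁ : H, v₁ ≠ 0 ∧ (∃ l < (0:ℝ), hess y v₁ = l • v₁) ∧
      ∃ c > 0, ∀ u : H, ⟪u, v₁⟫ = 0 → c * ‖u‖ ^ 2 ≤ ⟪hess y u, u⟫

/-- Assumption (A). -/
def AssumpA (E : H → ℝ) (hess : H → H →L[ℝ] H) (yA yB : H)
    (φb φb' φb'' : ℝ → H) (sbar : ℝ) : Prop :=
  C2On 0 1 φb φb' φb'' ∧ InU yA yB φb φb' ∧ SolvesMEP E φb φb' ∧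
  sbar ∈ Ioo (0:ℝ) 1 ∧
  IsStrongMin E hess yA ∧ IsStrongMin E hess yB ∧
  IsIndex1Saddle E hess (φb sbar) ∧
  ∀ α ∈ Icc (0:ℝ) 1, gradient E (φb α) = 0 → α = 0 ∨ α = sbar ∨ α = 1

/-- `λ̄(α) = L(φ̄)⁻² (∇E(φ̄(α)), φ̄'(α))`. -/
def lamBar (E : H → ℝ) (φ φ' : ℝ → H) (α : ℝ) : ℝ :=
  ((len φ') ^ 2)⁻¹ * ⟪gradient E (φ α), φ' α⟫

/-- The MEP operator `𝓕`. -/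
def Fop (E : H → ℝ) (sbar σA σB : ℝ) (φ φ' : ℝ → H) (α : ℝ) : H :=
  Pperp (φ' α) (gradient E (φ α))
    - ((‖φ' α‖ - len φ') / len φ') • Pproj (φ' α) (gradient E (φ α))
    + (α * (α - 1) * ‖φ' α‖ / (sbar * (sbar - 1) * len φ')) •
        Pproj (φ' α) (gradient E (φ sbar))
    + ((σA + σB) * (Gam φ' α - α * (α - 1) / (sbar * (sbar - 1)) * Gam φ' sbar)) •
        (‖φ' α‖⁻¹ • φ' α)

/-- Membership in the image space `Y`. -/
def MemY {F : Type*} [NormedAddCommGroup F] [NormedSpace ℝ F] (sbar : ℝ) (f : ℝ → F) : Prop :=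
  ContinuousOn f (Icc (0:ℝ) 1) ∧ f 0 = 0 ∧ f 1 = 0 ∧
  DifferentiableWithinAt ℝ f (Icc (0:ℝ) 1) 0 ∧
  DifferentiableWithinAt ℝ f (Icc (0:ℝ) 1) sbar ∧
  DifferentiableWithinAt ℝ f (Icc (0:ℝ) 1) 1

/-- Membership in the space `X`. -/
def MemX {F : Type*} [NormedAddCommGroup F] [NormedSpace ℝ F] (ψ ψ' : ℝ → F) : Prop :=
  C1On 0 1 ψ ψ' ∧ ψ 0 = 0 ∧ ψ 1 = 0

/-- The `C¹` (and `X`) norm. -/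
def normC1 {F : Type*} [NormedAddCommGroup F] (ψ ψ' : ℝ → F) : ℝ :=
  (⨆ α : Icc (0:ℝ) 1, ‖ψ (α : ℝ)‖) + ⨆ α : Icc (0:ℝ) 1, ‖ψ' (α : ℝ)‖

/-- The weighted norm on `Y`. -/
def normY {F : Type*} [NormedAddCommGroup F] (sbar : ℝ) (f : ℝ → F) : ℝ :=
  (⨆ α : Ioo (0:ℝ) 1, ‖f (α : ℝ)‖ / |(α : ℝ) * ((α : ℝ) - 1)|) +
    ⨆ α : ↥(Icc (0:ℝ) 1 \ {sbar}), ‖f (α : ℝ) - f sbar‖ / |(α : ℝ) - sbar|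

/-- `∫₀¹ (φ̄'(s), ψ'(s))/|φ̄'(s)| ds`. -/
def gInt (φb' ψ' : ℝ → H) : ℝ := ∫ s in (0:ℝ)..1, ⟪φb' s, ψ' s⟫ / ‖φb' s‖

/-- `g_ψ(α)` (the linearisation `δΓ(φ̄)ψ`). -/
def gFun (φb' ψ' : ℝ → H) (α : ℝ) : ℝ :=
  (∫ s in (0:ℝ)..α, ⟪φb' s, ψ' s⟫ / ‖φb' s‖) - α * gInt φb' ψ'

/-- `g_ψ'(α)`. -/
def gFun' (φb' ψ' : ℝ → H) (α : ℝ) : ℝ := ⟪φb' α, ψ' α⟫ / ‖φb' α‖ - gInt φb' ψ'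

/-- The linearised MEP operator `T = δ𝓕(φ̄)`. -/
def Tlin (E : H → ℝ) (hess : H → H →L[ℝ] H) (φb φb' : ℝ → H)
    (sbar σA σB : ℝ) (ψ ψ' : ℝ → H) (α : ℝ) : H :=
  Pperp (φb' α) (hess (φb α) (ψ α) - lamBar E φb φb' α • ψ' α)
    + (α * (α - 1) / (sbar * (sbar - 1))) • Pproj (φb' α) (hess (φb sbar) (ψ sbar))
    + ((σA + σB) * (gFun φb' ψ' α - α * (α - 1) / (sbar * (sbar - 1)) * gFun φb' ψ' sbar)
        - lamBar E φb φb' α * gFun' φb' ψ' α) • (‖φb' α‖⁻¹ • φb' α)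

/-- Assumption (B). -/
def AssumpB (hess : H → H →L[ℝ] H) (yA yB vA vB : H) (σA σB : ℝ) : Prop :=
  hess yA vA = σA • vA ∧ hess yB vB = σB • vB ∧
  (∀ μ ∈ spectrum ℝ (hess yA), σA ≤ μ) ∧
  (∀ μ ∈ spectrum ℝ (hess yB), σB ≤ μ) ∧
  (∃ ε > 0, ∀ μ ∈ spectrum ℝ (hess yA), μ ≠ σA → σA + ε ≤ μ) ∧
  (∃ ε > 0, ∀ μ ∈ spectrum ℝ (hess yB), μ ≠ σB → σB + ε ≤ μ) ∧
  (∀ u : H, hess yA u = σA • u → ∃ c : ℝ, u = c • vA) ∧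
  (∀ u : H, hess yB u = σB • u → ∃ c : ℝ, u = c • vB)

/-- `P_v` as a continuous linear map. -/
def projL (v : H) : H →L[ℝ] H := (innerSL ℝ (‖v‖⁻¹ • v)).smulRight (‖v‖⁻¹ • v)

/-- `P_v^⊥` as a continuous linear map. -/
def projPerpL (v : H) : H →L[ℝ] H := ContinuousLinearMap.id ℝ H - projL v

/-- `B(α) = P⊥ ∇²E(φ̄(α)) P⊥`. -/
def Bop (hess : H → H →L[ℝ] H) (φb φb' : ℝ → H) (α : ℝ) : H →L[ℝ] H :=
  (projPerpL (φb' α)).comp ((hess (φb α)).comp (projPerpL (φb' α)))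

/-- `D(α) y = −(y,t'(α))t(α) − (y,t(α))t'(α)`. -/
def Dop (t t' : ℝ → H) (α : ℝ) : H →L[ℝ] H :=
  -((innerSL ℝ (t' α)).smulRight (t α)) - (innerSL ℝ (t α)).smulRight (t' α)

/-- The operator `A(α)`. -/
def Aop {K : Type*} [NormedAddCommGroup K] [InnerProductSpace ℝ K] [CompleteSpace K]
    (E : H → ℝ) (hess : H → H →L[ℝ] H) (φb φb' t' : ℝ → H)
    (Q Q' : ℝ → K →L[ℝ] H) (α : ℝ) : K →L[ℝ] K :=
  (ContinuousLinearMap.adjoint (Q α)).comp ((Bop hess φb φb' α).comp (Q α))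
    - lamBar E φb φb' α •
        ((ContinuousLinearMap.adjoint (Q α)).comp
            ((Dop (fun s => ‖φb' s‖⁻¹ • φb' s) t' α).comp (Q α))
          - (ContinuousLinearMap.adjoint (Q α)).comp (Q' α))

/-- `ω_S`. -/
def omegaS (hess : H → H →L[ℝ] H) (yS : H) : ℝ :=
  sInf {l : ℝ | l ∈ spectrum ℝ (hess yS) ∧ 0 < l}

/-- `ω_B`. -/
def omegaB (hess : H → H →L[ℝ] H) (yB : H) (σB : ℝ) : ℝ :=
  sInf {l : ℝ | l ∈ spectrum ℝ (hess yB) ∧ l ≠ σB}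

/-- The tube `𝒰_ε` around the path. -/
def Utube (φb : ℝ → H) (ε : ℝ) : Set H := {y : H | ∃ α ∈ Icc (0:ℝ) 1, ‖y - φb α‖ ≤ ε}

/-- Restriction of a second derivative to a subspace. -/
def restrict2 (K : Submodule ℝ H) (T : H →L[ℝ] H →L[ℝ] ℝ) : K →L[ℝ] K →L[ℝ] ℝ :=
  (((ContinuousLinearMap.compL ℝ K H ℝ).flip K.subtypeL)).comp (T.comp K.subtypeL)

/-- `C⁰` distance between `E'` (on the subspace `K`) and `E`, over `S`. -/
def subC0dist (K : Submodule ℝ H) (E : H → ℝ) (E' : K → ℝ) (S : Set K) : ℝ :=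
  ⨆ y : S, |E' y.1 - E (y.1 : H)|

/-- `C¹` distance between `E'` (on the subspace `K`) and `E`, over `S`. -/
def subC1dist (K : Submodule ℝ H) (E : H → ℝ) (E' : K → ℝ) (S : Set K) : ℝ :=
  subC0dist K E E' S +
    ⨆ y : S, ‖fderiv ℝ E' y.1 - (fderiv ℝ E (y.1 : H)).comp K.subtypeL‖

/-- `C²` distance between `E'` (on the subspace `K`) and `E`, over `S`. -/
def subC2dist (K : Submodule ℝ H) (E : H → ℝ) (E' : K → ℝ) (S : Set K) : ℝ :=
  subC1dist K E E' S +
    ⨆ y : S, @Norm.norm (K →L[ℝ] K →L[ℝ] ℝ)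
        (@ContinuousLinearMap.hasOpNorm ℝ ℝ K (K →L[ℝ] ℝ) _ _ _ _ _ _ _)
        (fderiv ℝ (fun z => fderiv ℝ E' z) y.1
        - restrict2 K (fderiv ℝ (fun z => fderiv ℝ E z) (y.1 : H)))


section AuxLemmas

variable {H : Type*} [NormedAddCommGroup H] [InnerProductSpace ℝ H] [CompleteSpace H]

lemma my_hess_symm (E : H → ℝ) (hE : ContDiff ℝ 3 E)
    (hess : H → H →L[ℝ] H) (hhess : ∀ y : H, HasFDerivAt (gradient E) (hess y) y)
    (y u v : H) : ⟪hess y u, v⟫ = ⟪u, hess y v⟫ := by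
  set T : H →L[ℝ] (StrongDual ℝ H) :=
    (InnerProductSpace.toDual ℝ H).toContinuousLinearEquiv.toContinuousLinearMap with hT
  have hfd : ∀ x : H, HasFDerivAt E (fderiv ℝ E x) x := fun x =>
    (hE.differentiable (by norm_num)).differentiableAt.hasFDerivAt
  have heq : (fun x => fderiv ℝ E x) = fun x => T (gradient E x) := by
    funext x
    simp [hT, gradient, LinearIsometryEquiv.apply_symm_apply]
  have h2 : HasFDerivAt (fun x => fderiv ℝ E x) (T.comp (hess y)) y := by
    rw [heq]
    exact T.hasFDerivAt.comp y (hhess y)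
  have hs := second_derivative_symmetric hfd h2 u v
  simp only [ContinuousLinearMap.coe_comp', Function.comp_apply, hT,
    ContinuousLinearEquiv.coe_coe, LinearIsometryEquiv.coe_toContinuousLinearEquiv,
    InnerProductSpace.toDual_apply_apply] at hs
  rw [hs, real_inner_comm]

lemma my_slope_bound {f : ℝ → ℝ} {S : Set ℝ} {p d : ℝ}
    (hd : HasDerivWithinAt f d S p) (hf0 : f p = 0) (hdne : d ≠ 0) :
    ∃ δ > 0, ∀ α ∈ S, α ≠ p → |α - p| < δ →
      |d|/2 ≤ |f α / (α - p)| ∧ |f α / (α - p)| ≤ 2 * |d| := by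
  have h := hasDerivWithinAt_iff_tendsto_slope.mp hd
  have hev : ∀ᶠ α in 𝓝[S \ {p}] p, dist (slope f p α) d < |d|/2 :=
    Metric.tendsto_nhds.mp h (|d|/2) (by positivity)
  rw [eventually_nhdsWithin_iff, Metric.eventually_nhds_iff] at hev
  obtain ⟨δ, hδ, hball⟩ := hev
  refine ⟨δ, hδ, fun α hα hne hlt => ?_⟩
  have hb := hball (y := α) (by simpa [Real.dist_eq] using hlt) ⟨hα, hne⟩
  have hs : slope f p α = f α / (α - p) := by
    rw [slope_def_field, hf0, sub_zero]
  rw [hs, Real.dist_eq] at hb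
  have h1 : |f α / (α - p)| ≥ |d| - |d|/2 := by
    have := abs_sub_abs_le_abs_sub d (f α / (α - p))
    rw [abs_sub_comm] at this
    linarith
  have h2 : |f α / (α - p)| ≤ |d| + |d|/2 := by
    have := abs_sub_abs_le_abs_sub (f α / (α - p)) d
    linarith
  constructor <;> [linarith; linarith [abs_nonneg d]]

lemma my_combine {A t tmin cl cu : ℝ} (hcl : 0 ≤ cl) (hA1 : cl ≤ A) (hA2 : A ≤ cu)
    (htminpos : 0 < tmin) (ht1 : tmin ≤ t) (ht2 : t ≤ 1) :
    cl ≤ A / t ∧ A / t ≤ cu / tmin := by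
  have htpos : 0 < t := lt_of_lt_of_le htminpos ht1
  constructor
  · calc cl ≤ A := hA1
      _ = A / 1 := (div_one A).symm
      _ ≤ A / t := div_le_div_of_nonneg_left (le_trans hcl hA1) htpos ht2
  · exact div_le_div₀ (le_trans hcl (hA1.trans hA2)) hA2 htminpos ht1

end AuxLemmas

set_option maxHeartbeats 2000000 in
theorem stmt8
    (E : H → ℝ) (hE : ContDiff ℝ 3 E)
    (hess : H → H →L[ℝ] H) (hhess : ∀ y : H, HasFDerivAt (gradient E) (hess y) y)
    (yA yB : H) (φb φb' φb'' : ℝ → H) (sbar : ℝ)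
    (hA : AssumpA E hess yA yB φb φb' φb'' sbar) :
    ∃ c C : ℝ, 0 < c ∧ c ≤ C ∧
      ∀ α ∈ Ioo (0:ℝ) sbar ∪ Ioo sbar 1,
        c ≤ |lamBar E φb φb' α / (α * (α - sbar) * (α - 1))| ∧
        |lamBar E φb φb' α / (α * (α - sbar) * (α - 1))| ≤ C := by
  obtain ⟨hC2, hU, hMEP, hsb, hminA, hminB, hsad, hcrit⟩ := hA
  obtain ⟨hC1φ, hφ0, hφ1, hφ'ne⟩ := hU
  obtain ⟨hPerp, hGam⟩ := hMEP
  obtain ⟨hs0, hs1⟩ := hsb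
  have hsIcc : sbar ∈ Icc (0:ℝ) 1 := ⟨hs0.le, hs1.le⟩
  have h0Icc : (0:ℝ) ∈ Icc (0:ℝ) 1 := ⟨le_refl 0, zero_le_one⟩
  have h1Icc : (1:ℝ) ∈ Icc (0:ℝ) 1 := ⟨zero_le_one, le_refl 1⟩
  have hφ'cont : ContinuousOn φb' (Icc 0 1) := hC1φ.2
  -- L > 0
  have hLpos : 0 < len φb' := by
    apply intervalIntegral.intervalIntegral_pos_of_pos_on
    · exact (hφ'cont.norm.mono (by rw [uIcc_of_le zero_le_one])).intervalIntegrable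
    · intro x hx
      exact norm_pos_iff.mpr (hφ'ne x ⟨hx.1.le, hx.2.le⟩)
    · exact one_pos
  set L := len φb' with hLdef
  -- the scalar function f
  set f : ℝ → ℝ := fun α => ⟪gradient E (φb α), φb' α⟫ with hfdef
  -- gradient vanishes at the three critical parameters
  have hG0 : gradient E (φb 0) = 0 := by rw [hφ0]; exact hminA.1
  have hG1 : gradient E (φb 1) = 0 := by rw [hφ1]; exact hminB.1
  have hGS : gradient E (φb sbar) = 0 := hsad.1
  have hf00 : f 0 = 0 := by simp only [hfdef, hG0, inner_zero_left]
  have hf10 : f 1 = 0 := by simp only [hfdef, hG1, inner_zero_left]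
  have hfS0 : f sbar = 0 := by simp only [hfdef, hGS, inner_zero_left]
  -- derivative of f
  have hGd : ∀ α ∈ Icc (0:ℝ) 1, HasDerivWithinAt (fun s => gradient E (φb s))
      (hess (φb α) (φb' α)) (Icc 0 1) α := fun α hα =>
    (hhess (φb α)).comp_hasDerivWithinAt α (hC1φ.1 α hα)
  have hfd : ∀ α ∈ Icc (0:ℝ) 1, HasDerivWithinAt f
      (⟪gradient E (φb α), φb'' α⟫ + ⟪hess (φb α) (φb' α), φb' α⟫) (Icc 0 1) α :=
    fun α hα => HasDerivWithinAt.inner ℝ (hGd α hα) (hC2.2.1 α hα)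
  have hfcont : ContinuousOn f (Icc 0 1) := fun α hα => (hfd α hα).continuousWithinAt
  clear_value f
  -- f is nonzero away from the three critical parameters
  have hfne : ∀ α ∈ Icc (0:ℝ) 1, α ≠ 0 → α ≠ sbar → α ≠ 1 → f α ≠ 0 := by
    intro α hα h0 hs h1 hf0
    have hp := hPerp α hα
    rw [Pperp, sub_eq_zero, Pproj] at hp
    have hinner : ⟪gradient E (φb α), ‖φb' α‖⁻¹ • φb' α⟫ = 0 := by
      rw [real_inner_smul_right]
      simp only [hfdef] at hf0
      rw [hf0, mul_zero]
    have hG : gradient E (φb α) = 0 := by rw [hp, hinner, zero_smul]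
    rcases hcrit α hα hG with h | h | h <;> [exact h0 h; exact hs h; exact h1 h]
  -- derivative values at the three zeros
  set d0 : ℝ := ⟪gradient E (φb 0), φb'' 0⟫ + ⟪hess (φb 0) (φb' 0), φb' 0⟫ with hd0def
  set dS : ℝ := ⟪gradient E (φb sbar), φb'' sbar⟫ + ⟪hess (φb sbar) (φb' sbar), φb' sbar⟫
    with hdSdef
  set d1 : ℝ := ⟪gradient E (φb 1), φb'' 1⟫ + ⟪hess (φb 1) (φb' 1), φb' 1⟫ with hd1def
  clear_value d0 dS d1
  have hd0ne : d0 ≠ 0 := by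
    obtain ⟨c, hc, hcoer⟩ := hminA.2
    have hw : φb' 0 ≠ 0 := hφ'ne 0 h0Icc
    have h1 : c * ‖φb' 0‖ ^ 2 ≤ ⟪hess yA (φb' 0), φb' 0⟫ := hcoer (φb' 0)
    have h2 : (0:ℝ) < c * ‖φb' 0‖ ^ 2 := mul_pos hc (pow_pos (norm_pos_iff.mpr hw) 2)
    rw [hd0def, hG0, inner_zero_left, zero_add, hφ0]
    exact ne_of_gt (lt_of_lt_of_le h2 h1)
  have hd1ne : d1 ≠ 0 := by
    obtain ⟨c, hc, hcoer⟩ := hminB.2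
    have hw : φb' 1 ≠ 0 := hφ'ne 1 h1Icc
    have h1 : c * ‖φb' 1‖ ^ 2 ≤ ⟪hess yB (φb' 1), φb' 1⟫ := hcoer (φb' 1)
    have h2 : (0:ℝ) < c * ‖φb' 1‖ ^ 2 := mul_pos hc (pow_pos (norm_pos_iff.mpr hw) 2)
    rw [hd1def, hG1, inner_zero_left, zero_add, hφ1]
    exact ne_of_gt (lt_of_lt_of_le h2 h1)
  -- the eigenvector relation at the saddle
  have hwS : φb' sbar ≠ 0 := hφ'ne sbar hsIcc
  have hdSne : dS ≠ 0 := by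
    intro hdS0
    rw [hdSdef] at hdS0
    -- n(α) = ⟪φ'(α), φ'(α)⟫
    set n : ℝ → ℝ := fun α => ⟪φb' α, φb' α⟫ with hndef
    have hnS : n sbar ≠ 0 := by
      have h' : n sbar = ‖φb' sbar‖ ^ 2 := real_inner_self_eq_norm_sq _
      rw [h']
      exact pow_ne_zero 2 (norm_ne_zero_iff.mpr hwS)
    have hnd : HasDerivWithinAt n (⟪φb' sbar, φb'' sbar⟫ + ⟪φb'' sbar, φb' sbar⟫)
        (Icc 0 1) sbar :=
      HasDerivWithinAt.inner ℝ (hC2.2.1 sbar hsIcc) (hC2.2.1 sbar hsIcc)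
    -- m = f / n
    have hmd := (hfd sbar hsIcc).div hnd hnS
    -- G = m • φ' on [0,1]
    have hGm : ∀ α ∈ Icc (0:ℝ) 1, gradient E (φb α) = (f α / n α) • φb' α := by
      intro α hα
      have hp := hPerp α hα
      rw [Pperp, sub_eq_zero, Pproj] at hp
      rw [hp, real_inner_smul_right, smul_smul]
      congr 1
      have hnφ : ‖φb' α‖ ≠ 0 := norm_ne_zero_iff.mpr (hφ'ne α hα)
      rw [hfdef, hndef]
      simp only [real_inner_self_eq_norm_sq]
      field_simp
    -- derivative of m • φ' at sbar
    have hRHS : HasDerivWithinAt (fun α => (f α / n α) • φb' α)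
        ((f sbar / n sbar) • φb'' sbar +
          (((⟪gradient E (φb sbar), φb'' sbar⟫ + ⟪hess (φb sbar) (φb' sbar), φb' sbar⟫) * n sbar
            - f sbar * (⟪φb' sbar, φb'' sbar⟫ + ⟪φb'' sbar, φb' sbar⟫)) / n sbar ^ 2) • φb' sbar)
        (Icc 0 1) sbar := hmd.smul (hC2.2.1 sbar hsIcc)
    rw [hfS0, hdS0] at hRHS
    simp only [zero_div, zero_smul, zero_mul, zero_sub, neg_zero, mul_zero, sub_zero,
      zero_add, add_zero] at hRHS
    -- so the derivative of gradient E ∘ φb at sbar is 0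
    have hRHS' : HasDerivWithinAt (fun s => gradient E (φb s)) 0 (Icc 0 1) sbar :=
      hRHS.congr hGm (hGm sbar hsIcc)
    have hud : UniqueDiffWithinAt ℝ (Icc (0:ℝ) 1) sbar := (uniqueDiffOn_Icc one_pos) sbar hsIcc
    have heig : hess (φb sbar) (φb' sbar) = 0 := by
      have e1 := (hGd sbar hsIcc).derivWithin hud
      have e2 := hRHS'.derivWithin hud
      rw [e1] at e2
      exact e2
    -- the saddle structure rules this out
    obtain ⟨-, v₁, hv₁ne, ⟨l, hl, hev⟩, c, hc, hcoer⟩ := hsad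
    have hsym := my_hess_symm E hE hess hhess (φb sbar)
    have horth : ⟪φb' sbar, v₁⟫ = 0 := by
      have h1 : ⟪φb' sbar, hess (φb sbar) v₁⟫ = 0 := by
        rw [← hsym, heig, inner_zero_left]
      rw [hev, real_inner_smul_right] at h1
      exact (mul_eq_zero.mp h1).resolve_left (ne_of_lt hl)
    have h2 := hcoer (φb' sbar) horth
    rw [heig, inner_zero_left] at h2
    have : (0:ℝ) < ‖φb' sbar‖ ^ 2 := pow_pos (norm_pos_iff.mpr hwS) 2
    nlinarith
  -- slope bounds near the three zeros
  obtain ⟨δ0, hδ0, hB0⟩ := my_slope_bound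
    (show HasDerivWithinAt f d0 (Icc 0 1) 0 by rw [hd0def]; exact hfd 0 h0Icc) hf00 hd0ne
  obtain ⟨δS, hδS, hBS⟩ := my_slope_bound
    (show HasDerivWithinAt f dS (Icc 0 1) sbar by rw [hdSdef]; exact hfd sbar hsIcc) hfS0 hdSne
  obtain ⟨δ1, hδ1, hB1⟩ := my_slope_bound
    (show HasDerivWithinAt f d1 (Icc 0 1) 1 by rw [hd1def]; exact hfd 1 h1Icc) hf10 hd1ne
  set ε : ℝ := min (min δ0 (min δS δ1)) (min (sbar / 2) ((1 - sbar) / 2)) with hεdef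
  have hεpos : 0 < ε :=
    lt_min (lt_min hδ0 (lt_min hδS hδ1)) (lt_min (by linarith) (by linarith))
  have hε0 : ε ≤ δ0 := le_trans (min_le_left _ _) (min_le_left _ _)
  have hεS : ε ≤ δS := le_trans (min_le_left _ _) (le_trans (min_le_right _ _) (min_le_left _ _))
  have hε1 : ε ≤ δ1 := le_trans (min_le_left _ _) (le_trans (min_le_right _ _) (min_le_right _ _))
  have hεs2 : ε ≤ sbar / 2 := le_trans (min_le_right _ _) (min_le_left _ _)
  have hεs2' : ε ≤ (1 - sbar) / 2 := le_trans (min_le_right _ _) (min_le_right _ _)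
  clear_value ε
  set tmin : ℝ := sbar * (1 - sbar) / 4 with htmindef
  clear_value tmin
  have htminpos : 0 < tmin := by rw [htmindef]; nlinarith
  set c0 : ℝ := min (|d0| / 2) (min (|dS| / 2) (|d1| / 2)) with hc0def
  set C0 : ℝ := max (2 * |d0| / tmin) (max (2 * |dS| / tmin) (2 * |d1| / tmin)) with hC0def
  clear_value c0 C0
  have hc0a : c0 ≤ |d0| / 2 := by rw [hc0def]; exact min_le_left _ _
  have hc0b : c0 ≤ |dS| / 2 := by
    rw [hc0def]; exact le_trans (min_le_right _ _) (min_le_left _ _)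
  have hc0c : c0 ≤ |d1| / 2 := by
    rw [hc0def]; exact le_trans (min_le_right _ _) (min_le_right _ _)
  have hC0a : 2 * |d0| / tmin ≤ C0 := by rw [hC0def]; exact le_max_left _ _
  have hC0b : 2 * |dS| / tmin ≤ C0 := by
    rw [hC0def]; exact le_trans (le_max_left _ _) (le_max_right _ _)
  have hC0c : 2 * |d1| / tmin ≤ C0 := by
    rw [hC0def]; exact le_trans (le_max_right _ _) (le_max_right _ _)
  have hc0pos : 0 < c0 := by
    rw [hc0def]
    refine lt_min ?_ (lt_min ?_ ?_) <;>
      [exact half_pos (abs_pos.mpr hd0ne); exact half_pos (abs_pos.mpr hdSne);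
        exact half_pos (abs_pos.mpr hd1ne)]
  -- uniform bounds on the three near-regions
  have hregion : ∀ α, 0 < α → α < 1 → α ≠ sbar →
      (α < ε ∨ |α - sbar| < ε ∨ 1 - α < ε) →
      c0 ≤ |f α / (α * (α - sbar) * (α - 1))| ∧
        |f α / (α * (α - sbar) * (α - 1))| ≤ C0 := by
    intro α h0 h1 hs hcase
    have hαI : α ∈ Icc (0:ℝ) 1 := ⟨h0.le, h1.le⟩
    rcases hcase with h | h | h
    · -- near 0
      have hA := hB0 α hαI (ne_of_gt h0)
        (by rw [sub_zero, abs_of_pos h0]; exact lt_of_lt_of_le h hε0)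
      rw [sub_zero] at hA
      have hsplit : f α / (α * (α - sbar) * (α - 1)) = (f α / α) / ((α - sbar) * (α - 1)) := by
        rw [div_div, mul_assoc]
      have e1 : |α - sbar| = sbar - α := by
        rw [abs_sub_comm]; exact abs_of_pos (by linarith)
      have e2 : |α - 1| = 1 - α := by
        rw [abs_sub_comm]; exact abs_of_pos (by linarith)
      have ht1 : tmin ≤ |(α - sbar) * (α - 1)| := by
        rw [abs_mul, e1, e2]
        have hp1 : sbar / 2 ≤ sbar - α := by linarith
        have hp2 : 1 / 2 ≤ 1 - α := by linarith
        have h' : sbar / 2 * (1 / 2) ≤ (sbar - α) * (1 - α) :=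
          mul_le_mul hp1 hp2 (by linarith) (by linarith)
        rw [htmindef]; nlinarith
      have ht2 : |(α - sbar) * (α - 1)| ≤ 1 := by
        rw [abs_mul, e1, e2]
        nlinarith
      rw [hsplit, abs_div]
      obtain ⟨hl, hu⟩ := my_combine (by positivity) hA.1 hA.2 htminpos ht1 ht2
      exact ⟨le_trans hc0a hl, le_trans hu hC0a⟩
    · -- near sbar
      have hA := hBS α hαI hs (lt_of_lt_of_le h hεS)
      have hsplit : f α / (α * (α - sbar) * (α - 1))
          = (f α / (α - sbar)) / (α * (α - 1)) := by
        rw [div_div]; congr 1; ring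
      have habs : |α - sbar| < ε := h
      have hup : α ≤ sbar + ε := by
        have := abs_lt.mp habs; linarith [this.2]
      have hlo : sbar - ε ≤ α := by
        have := abs_lt.mp habs; linarith [this.1]
      have e1 : |α| = α := abs_of_pos h0
      have e2 : |α - 1| = 1 - α := by
        rw [abs_sub_comm]; exact abs_of_pos (by linarith)
      have ht1 : tmin ≤ |α * (α - 1)| := by
        rw [abs_mul, e1, e2]
        have hp1 : sbar / 2 ≤ α := by linarith
        have hp2 : (1 - sbar) / 2 ≤ 1 - α := by linarith
        have h' : sbar / 2 * ((1 - sbar) / 2) ≤ α * (1 - α) :=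
          mul_le_mul hp1 hp2 (by linarith) (by linarith)
        rw [htmindef]; nlinarith
      have ht2 : |α * (α - 1)| ≤ 1 := by
        rw [abs_mul, e1, e2]
        nlinarith
      rw [hsplit, abs_div]
      obtain ⟨hl, hu⟩ := my_combine (by positivity) hA.1 hA.2 htminpos ht1 ht2
      exact ⟨le_trans hc0b hl, le_trans hu hC0b⟩
    · -- near 1
      have hA := hB1 α hαI (ne_of_lt h1)
        (by rw [abs_sub_comm, abs_of_pos (by linarith : (0:ℝ) < 1 - α)]
            exact lt_of_lt_of_le h hε1)
      have hsplit : f α / (α * (α - sbar) * (α - 1))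
          = (f α / (α - 1)) / (α * (α - sbar)) := by
        rw [div_div]; congr 1; ring
      have e1 : |α| = α := abs_of_pos h0
      have e2 : |α - sbar| = α - sbar := abs_of_pos (by linarith [hεs2'.trans_lt' h])
      have ht1 : tmin ≤ |α * (α - sbar)| := by
        rw [abs_mul, e1, e2]
        have hp1 : sbar / 2 ≤ α := by linarith
        have hp2 : (1 - sbar) / 2 ≤ α - sbar := by linarith
        have h' : sbar / 2 * ((1 - sbar) / 2) ≤ α * (α - sbar) :=
          mul_le_mul hp1 hp2 (by linarith) (by linarith)
        rw [htmindef]; nlinarith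
      have ht2 : |α * (α - sbar)| ≤ 1 := by
        rw [abs_mul, e1, e2]
        nlinarith
      rw [hsplit, abs_div]
      obtain ⟨hl, hu⟩ := my_combine (by positivity) hA.1 hA.2 htminpos ht1 ht2
      exact ⟨le_trans hc0c hl, le_trans hu hC0c⟩
  -- the middle compact region
  have hKcomp : IsCompact ((Icc ε (1 - ε)) ∩ {x : ℝ | ε ≤ |x - sbar|}) :=
    isCompact_Icc.inter_right
      (isClosed_le continuous_const ((continuous_id.sub continuous_const).abs))
  set K : Set ℝ := (Icc ε (1 - ε)) ∩ {x : ℝ | ε ≤ |x - sbar|} with hKdef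
  have hKsub : K ⊆ Icc 0 1 := by
    rintro x ⟨⟨hx1, hx2⟩, -⟩
    exact ⟨le_trans hεpos.le hx1, by linarith⟩
  have hKprop : ∀ x ∈ K, 0 < x ∧ x < 1 ∧ x ≠ sbar := by
    rintro x ⟨⟨hx1, hx2⟩, hx3⟩
    refine ⟨lt_of_lt_of_le hεpos hx1, by linarith, fun hxs => ?_⟩
    rw [hxs] at hx3
    simp only [Set.mem_setOf_eq, sub_self, abs_zero] at hx3
    linarith
  have hKq : ∀ x ∈ K, x * (x - sbar) * (x - 1) ≠ 0 := by
    intro x hx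
    obtain ⟨h0, h1, hs⟩ := hKprop x hx
    exact mul_ne_zero (mul_ne_zero (ne_of_gt h0) (sub_ne_zero.mpr hs))
      (sub_ne_zero.mpr (ne_of_lt h1))
  have hrcont : ContinuousOn (fun x => |f x / (x * (x - sbar) * (x - 1))|) K := by
    refine ContinuousOn.abs (ContinuousOn.div (hfcont.mono hKsub) ?_ hKq)
    exact ((continuous_id.mul (continuous_id.sub continuous_const)).mul
      (continuous_id.sub continuous_const)).continuousOn
  obtain ⟨mK, MK, hmKpos, hKbound⟩ : ∃ m M : ℝ, 0 < m ∧ ∀ x ∈ K,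
      m ≤ |f x / (x * (x - sbar) * (x - 1))| ∧ |f x / (x * (x - sbar) * (x - 1))| ≤ M := by
    rcases K.eq_empty_or_nonempty with hKe | hKne
    · refine ⟨1, 1, one_pos, fun x hx => ?_⟩
      rw [hKe] at hx
      exact absurd hx (notMem_empty x)
    · obtain ⟨xm, hxm, hmin⟩ := hKcomp.exists_isMinOn hKne hrcont
      obtain ⟨xM, hxM, hmax⟩ := hKcomp.exists_isMaxOn hKne hrcont
      refine ⟨_, _, ?_, fun x hx => ⟨isMinOn_iff.mp hmin x hx, isMaxOn_iff.mp hmax x hx⟩⟩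
      obtain ⟨h0, h1, hs⟩ := hKprop xm hxm
      exact abs_pos.mpr (div_ne_zero
        (hfne xm (hKsub hxm) (ne_of_gt h0) hs (ne_of_lt h1)) (hKq xm hxm))
  -- assemble the final constants
  have hLinvpos : (0:ℝ) < (L ^ 2)⁻¹ := inv_pos.mpr (pow_pos hLpos 2)
  refine ⟨(L ^ 2)⁻¹ * min c0 mK, (L ^ 2)⁻¹ * max C0 MK,
    mul_pos hLinvpos (lt_min hc0pos hmKpos), ?_, ?_⟩
  · -- c ≤ C
    apply mul_le_mul_of_nonneg_left _ hLinvpos.le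
    have htm4 : tmin ≤ 4 := by rw [htmindef]; nlinarith
    have h1 : c0 ≤ C0 := by
      refine le_trans hc0a (le_trans ?_ hC0a)
      rw [div_le_div_iff₀ two_pos htminpos]
      nlinarith [abs_nonneg d0]
    exact le_trans (min_le_left _ _) (le_trans h1 (le_max_left _ _))
  · rintro α hα
    have hα' : 0 < α ∧ α < 1 ∧ α ≠ sbar := by
      rcases hα with ⟨ha, hb⟩ | ⟨ha, hb⟩
      exacts [⟨ha, lt_trans hb hs1, ne_of_lt hb⟩, ⟨lt_trans hs0 ha, hb, ne_of_gt ha⟩]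
    obtain ⟨h0, h1, hs⟩ := hα'
    have hbound : min c0 mK ≤ |f α / (α * (α - sbar) * (α - 1))| ∧
        |f α / (α * (α - sbar) * (α - 1))| ≤ max C0 MK := by
      by_cases hc1 : α < ε
      · have h := hregion α h0 h1 hs (Or.inl hc1)
        exact ⟨le_trans (min_le_left _ _) h.1, le_trans h.2 (le_max_left _ _)⟩
      by_cases hc2 : |α - sbar| < ε
      · have h := hregion α h0 h1 hs (Or.inr (Or.inl hc2))
        exact ⟨le_trans (min_le_left _ _) h.1, le_trans h.2 (le_max_left _ _)⟩
      by_cases hc3 : 1 - α < ε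
      · have h := hregion α h0 h1 hs (Or.inr (Or.inr hc3))
        exact ⟨le_trans (min_le_left _ _) h.1, le_trans h.2 (le_max_left _ _)⟩
      · have hxK : α ∈ K :=
          ⟨⟨le_of_not_gt hc1, by linarith [le_of_not_gt hc3]⟩, le_of_not_gt hc2⟩
        have h := hKbound α hxK
        exact ⟨le_trans (min_le_right _ _) h.1, le_trans h.2 (le_max_right _ _)⟩
    have hlam : |lamBar E φb φb' α / (α * (α - sbar) * (α - 1))|
        = (L ^ 2)⁻¹ * |f α / (α * (α - sbar) * (α - 1))| := by
      have he : lamBar E φb φb' α = (L ^ 2)⁻¹ * f α := by rw [hfdef, hLdef]; rfl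
      rw [he, mul_div_assoc, abs_mul, abs_of_pos hLinvpos]
    rw [hlam]
    exact ⟨mul_le_mul_of_nonneg_left hbound.1 hLinvpos.le,
      mul_le_mul_of_nonneg_left hbound.2 hLinvpos.le⟩
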